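/- Let $A_1,\dots,A_k$ and $B_1,\dots,B_k$ be $n\times n$ matrices over a commutative ring such that all the $B_i$ commute pairwise. Define $p(x_1,\dots,x_k)=\det(A_1x_1+\cdots+A_kx_k)$. Then for all $b,e\in[n]$, the $(b,e)$ entry of $p(B_1,\dots,B_k)$ equals the signed weight sum over pathmutations: $p(B_1,\dots,B_k)_{b,e} = \sum_{\pi\in S_n}\mathrm{sgn}(\pi)\sum_{(\ell_1,\dots,\ell_n)\in[k]^n}\left(\prod_{i=1}^n (A_{\ell_i})_{i,\pi_i}\right)\left(B_{\ell_1}B_{\ell_2}\cdots B_{\ell_n}\right)_{b,e}$. -/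

import Mathlib

open MvPolynomial

/-- The polynomial `p(x₁,…,x_k) = det(A₁x₁ + ⋯ + A_k x_k)`. -/
noncomputable def phillipsPoly {R : Type*} [CommRing R] {n k : ℕ}
    (A : Fin k → Matrix (Fin n) (Fin n) R) : MvPolynomial (Fin k) R :=
  Matrix.det (∑ i, (MvPolynomial.X i : MvPolynomial (Fin k) R) • (A i).map MvPolynomial.C)

/-- Substitution of matrices `B i` for the variables `x i`, replacing each monomial
by the corresponding ordered product of powers of the `B i`. -/
noncomputable def matSubst {R : Type*} [CommRing R] {n k : ℕ}
    (p : MvPolynomial (Fin k) R) (B : Fin k → Matrix (Fin n) (Fin n) R) :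
    Matrix (Fin n) (Fin n) R :=
  ∑ m ∈ p.support, p.coeff m • ((List.finRange k).map fun i => B i ^ m i).prod

section aux
variable {R : Type*} [CommRing R] {n k : ℕ}

lemma count_map_list {α β : Type*} [DecidableEq β] (f : α → β) (l : List α) (j : β) :
    List.count j (l.map f) = (l.map fun a => if f a = j then 1 else 0).sum := by
  induction l with
  | nil => simp
  | cons a l ih => by_cases h : f a = j <;> simp [List.count_cons, ih, h, Nat.add_comm]

lemma monomial_finset_prod {ι : Type*} (s : Finset ι) (d : ι → (Fin k →₀ ℕ)) (c : ι → R) :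
    ∏ i ∈ s, (MvPolynomial.monomial (d i) (c i)) = MvPolynomial.monomial (∑ i ∈ s, d i) (∏ i ∈ s, c i) := by
  induction s using Finset.cons_induction with
  | empty => simp
  | cons a s ha ih => rw [Finset.prod_cons, Finset.sum_cons, Finset.prod_cons, ih, MvPolynomial.monomial_mul]

lemma prod_X_mul_C (ℓ : Fin n → Fin k) (a : Fin n → R) :
    ∏ i : Fin n, (MvPolynomial.X (ℓ i) * MvPolynomial.C (a i) : MvPolynomial (Fin k) R) =
      MvPolynomial.monomial (∑ i : Fin n, Finsupp.single (ℓ i) 1) (∏ i : Fin n, a i) := by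
  have h1 : ∀ i : Fin n, (MvPolynomial.X (ℓ i) * MvPolynomial.C (a i) : MvPolynomial (Fin k) R)
      = MvPolynomial.monomial (Finsupp.single (ℓ i) 1) (a i) := by
    intro i
    rw [mul_comm, MvPolynomial.X, MvPolynomial.C_mul_monomial, mul_one]
  simp_rw [h1]
  exact monomial_finset_prod _ _ _

lemma prod_B_eq (B : Fin k → Matrix (Fin n) (Fin n) R)
    (hB : ∀ i j, B i * B j = B j * B i) (ℓ : Fin n → Fin k) :
    ((List.finRange k).map fun j => B j ^ ((∑ i : Fin n, Finsupp.single (ℓ i) 1 : Fin k →₀ ℕ) j)).prod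
      = ((List.finRange n).map fun i => B (ℓ i)).prod := by
  classical
  set m : Fin k → ℕ := fun j => ((∑ i : Fin n, Finsupp.single (ℓ i) 1 : Fin k →₀ ℕ) j) with hm
  have hmj : ∀ j, m j = ((List.finRange n).map fun i => if ℓ i = j then 1 else 0).sum := by
    intro j
    rw [hm]
    simp only [Finsupp.coe_finset_sum, Finset.sum_apply, Finsupp.single_apply]
    rw [Fin.sum_univ_def]
  set l1 : List (Fin k) := (List.finRange n).map ℓ with hl1
  set l2 : List (Fin k) := (List.finRange k).flatMap (fun j => List.replicate (m j) j) with hl2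
  have hperm : l1.Perm l2 := by
    rw [List.perm_iff_count]
    intro j
    have c1 : List.count j l1 = m j := by
      rw [hl1, count_map_list, hmj]
    have c2 : List.count j l2 = m j := by
      rw [hl2, List.count_flatMap]
      have : ((List.finRange k).map (List.count j ∘ fun j' => List.replicate (m j') j')).sum
          = ((List.finRange k).map fun j' => if j' = j then m j' else 0).sum := by
        congr 1
        apply List.map_congr_left
        intro j' _
        simp [List.count_replicate]
      rw [this, ← Fin.sum_univ_def]
      simp
    rw [c1, c2]
  have hpair : (l1.map B).Pairwise Commute := by
    rw [List.pairwise_map]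
    exact List.pairwise_of_forall fun a b => hB a b
  have hprod : (l1.map B).prod = (l2.map B).prod := (hperm.map B).prod_eq' hpair
  have h2 : (l2.map B).prod = ((List.finRange k).map fun j => B j ^ m j).prod := by
    rw [hl2, List.map_flatMap]
    rw [List.flatMap, List.prod_flatten, List.map_map]
    congr 1
    apply List.map_congr_left
    intro j _
    simp [List.prod_replicate]
  rw [← h2, ← hprod, hl1, List.map_map]
  rfl

end aux

section aux2
variable {R : Type*} [CommRing R] {n k : ℕ}

lemma matSubst_eq_sum (p : MvPolynomial (Fin k) R) (B : Fin k → Matrix (Fin n) (Fin n) R) :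
    matSubst p B = (AddMonoidAlgebra.coeff p).sum fun m c => c • ((List.finRange k).map fun i => B i ^ m i).prod := by
  rw [matSubst, MvPolynomial.sum_def]

noncomputable def matSubstHom (B : Fin k → Matrix (Fin n) (Fin n) R) :
    MvPolynomial (Fin k) R →+ Matrix (Fin n) (Fin n) R where
  toFun p := matSubst p B
  map_zero' := by simp [matSubst_eq_sum]
  map_add' p q := by
    show matSubst _ _ = matSubst _ _ + matSubst _ _
    rw [matSubst_eq_sum, matSubst_eq_sum, matSubst_eq_sum, AddMonoidAlgebra.coeff_add]
    exact Finsupp.sum_add_index' (fun m => by simp) (fun m c d => add_smul c d _)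

lemma matSubst_monomial (m : Fin k →₀ ℕ) (c : R) (B : Fin k → Matrix (Fin n) (Fin n) R) :
    matSubst (MvPolynomial.monomial m c) B
      = c • ((List.finRange k).map fun i => B i ^ m i).prod := by
  rw [matSubst_eq_sum]
  exact MvPolynomial.sum_monomial_eq (by simp)

end aux2

/-- The `(b,e)` entry of `p(B₁,…,B_k)` is the signed weight sum over pathmutations. -/
theorem phillips_pathmutation_expansion {R : Type*} [CommRing R] {n k : ℕ}
    (A B : Fin k → Matrix (Fin n) (Fin n) R)
    (hB : ∀ i j, B i * B j = B j * B i) (b e : Fin n) :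
    matSubst (phillipsPoly A) B b e =
      ∑ π : Equiv.Perm (Fin n), ((Equiv.Perm.sign π : ℤ) : R) *
        ∑ ℓ : Fin n → Fin k,
          (∏ i : Fin n, (A (ℓ i)) i (π i)) *
            (((List.finRange n).map fun i => B (ℓ i)).prod b e) := by
  classical
  have hpoly : phillipsPoly A = ∑ π : Equiv.Perm (Fin n), (Equiv.Perm.sign π : ℤ) •
      ∑ ℓ : Fin n → Fin k, MvPolynomial.monomial (∑ i : Fin n, Finsupp.single (ℓ i) 1)
        (∏ i : Fin n, A (ℓ i) i (π i)) := by
    rw [phillipsPoly, ← Matrix.det_transpose, Matrix.det_apply']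
    apply Finset.sum_congr rfl
    intro π _
    rw [← zsmul_eq_mul]
    congr 1
    have hentry : ∀ i : Fin n,
        Matrix.transpose (∑ l, (MvPolynomial.X l : MvPolynomial (Fin k) R) • (A l).map MvPolynomial.C) (π i) i
          = ∑ l, MvPolynomial.X l * MvPolynomial.C (A l i (π i)) := by
      intro i
      simp [Matrix.transpose_apply, Matrix.sum_apply, Matrix.map_apply, smul_eq_mul]
    simp_rw [hentry]
    rw [Finset.prod_univ_sum (fun _ => Finset.univ)
      (fun i l => MvPolynomial.X l * MvPolynomial.C (A l i (π i))), Fintype.piFinset_univ]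
    exact Finset.sum_congr rfl fun ℓ _ => prod_X_mul_C ℓ _
  have hsub : matSubst (phillipsPoly A) B
      = ∑ π : Equiv.Perm (Fin n), (Equiv.Perm.sign π : ℤ) •
        ∑ ℓ : Fin n → Fin k, (∏ i : Fin n, A (ℓ i) i (π i)) •
          ((List.finRange n).map fun i => B (ℓ i)).prod := by
    show matSubstHom B (phillipsPoly A) = _
    rw [hpoly, map_sum]
    apply Finset.sum_congr rfl
    intro π _
    rw [map_zsmul, map_sum]
    congr 1
    apply Finset.sum_congr rfl
    intro ℓ _
    show matSubst _ _ = _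
    rw [matSubst_monomial, prod_B_eq B hB ℓ]
  rw [hsub]
  rw [Matrix.sum_apply]
  apply Finset.sum_congr rfl
  intro π _
  rw [Matrix.smul_apply, Matrix.sum_apply, zsmul_eq_mul]
  congr 1
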